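/- Let q be a real number with q > 1 and m ≥ 1 an integer. For 1 ≤ k ≤ m+1 define c_k = (1 - q^{-(2k-1)}) · q^{-2k^2+3k-1} / (q^{-2};q^{-2})_{k-1} · ( (q^{-2k};q^{-2})_{m-k+1} / (q^{-2};q^{-2})_{m-k+1} ) · q^{-1-m+k}. Then Σ_{k=1}^{m+1} c_k = 1/( q^m (1/q^2; 1/q^2)_m ) + (1/q^{m+1}) · Σ_{i=0}^{m} (-1)^{i-1} / ( q^{i(i+1)} (1/q^2; 1/q^2)_{m-i} ). -/

import Mathlib

/-- The q-Pochhammer symbol `(a; Q)_n = ∏_{j=0}^{n-1} (1 - a Q^j)` over the reals. -/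
noncomputable def qPoch (a Q : ℝ) (n : ℕ) : ℝ := ∏ j ∈ Finset.range n, (1 - a * Q ^ j)

lemma qPoch_zero (a Q : ℝ) : qPoch a Q 0 = 1 := Finset.prod_range_zero _

lemma qPoch_succ (a Q : ℝ) (n : ℕ) :
    qPoch a Q (n + 1) = qPoch a Q n * (1 - a * Q ^ n) := Finset.prod_range_succ _ _

lemma qPoch_succ_left (a Q : ℝ) (n : ℕ) :
    qPoch a Q (n + 1) = (1 - a) * qPoch (a * Q) Q n := by
  rw [qPoch, Finset.prod_range_succ']
  simp only [pow_zero, mul_one, pow_succ']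
  rw [mul_comm]
  congr 1
  exact Finset.prod_congr rfl fun i _ => by ring_nf

lemma qPoch_add (a Q : ℝ) (s t : ℕ) :
    qPoch a Q (s + t) = qPoch a Q s * qPoch (a * Q ^ s) Q t := by
  rw [qPoch, Finset.prod_range_add]
  congr 1
  exact Finset.prod_congr rfl fun i _ => by rw [pow_add]; ring

lemma qPoch_pos {a Q : ℝ} (h0 : 0 ≤ a) (h1 : a < 1) (hQ0 : 0 ≤ Q) (hQ1 : Q ≤ 1) (n : ℕ) :
    0 < qPoch a Q n := by
  apply Finset.prod_pos
  intro j _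
  have : a * Q ^ j ≤ a := by
    have := pow_le_one₀ hQ0 hQ1 (n := j)
    nlinarith
  linarith

lemma qPoch_succ' (Q : ℝ) (n : ℕ) :
    qPoch Q Q (n + 1) = qPoch Q Q n * (1 - Q ^ (n + 1)) := by
  rw [qPoch_succ, ← pow_succ']

noncomputable def Bn (Q : ℝ) (m j : ℕ) : ℝ :=
  if j ≤ m then qPoch Q Q m / (qPoch Q Q j * qPoch Q Q (m - j)) else 0

noncomputable def tt' (Q : ℝ) (r k m j : ℕ) : ℝ :=
  Q ^ (j * j + r * j) * Bn Q m j / qPoch (Q ^ k) Q j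

noncomputable def ck (Q : ℝ) (k m : ℕ) : ℝ :=
  ∑ i ∈ Finset.range (m + 1), (-1 : ℝ) ^ i * Q ^ (k * i + Nat.choose i 2) / qPoch Q Q (m - i)

section

variable {Q : ℝ} (hQ0 : 0 < Q) (hQ1 : Q < 1)

include hQ0 hQ1

lemma P_pos (n : ℕ) : 0 < qPoch Q Q n := qPoch_pos hQ0.le hQ1 hQ0.le hQ1.le n

lemma P_ne (n : ℕ) : qPoch Q Q n ≠ 0 := (P_pos hQ0 hQ1 n).ne'

lemma Pk_pos (k n : ℕ) (hk : 1 ≤ k) : 0 < qPoch (Q ^ k) Q n :=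
  qPoch_pos (pow_nonneg hQ0.le k) (pow_lt_one₀ hQ0.le hQ1 (by omega)) hQ0.le hQ1.le n

lemma one_sub_pow_pos (k : ℕ) (hk : 1 ≤ k) : 0 < 1 - Q ^ k := by
  have := pow_lt_one₀ hQ0.le hQ1 (n := k) (by omega)
  linarith

lemma Bn_zero (m : ℕ) : Bn Q m 0 = 1 := by
  simp [Bn, qPoch_zero, div_self (P_ne hQ0 hQ1 m)]

lemma Bn_pascal (m j : ℕ) (hj : 1 ≤ j) :
    Bn Q (m + 1) j = Bn Q m j + Q ^ (m + 1 - j) * Bn Q m (j - 1) := by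
  obtain ⟨i, rfl⟩ : ∃ i, j = i + 1 := ⟨j - 1, by omega⟩
  simp only [Nat.add_sub_cancel]
  rcases le_or_gt (i + 1) m with h | h
  · obtain ⟨d, rfl⟩ : ∃ d, m = i + 1 + d := ⟨m - (i + 1), by omega⟩
    have e1 : i + 1 + d + 1 - (i + 1) = d + 1 := by omega
    have e2 : i + 1 + d - (i + 1) = d := by omega
    have e3 : i + 1 + d - i = d + 1 := by omega
    rw [Bn, Bn, Bn, if_pos (by omega), if_pos (by omega), if_pos (by omega), e1, e2, e3]
    have h1 : qPoch Q Q (i + 1 + d + 1) = qPoch Q Q (i + 1 + d) * (1 - Q ^ (i + 1 + d + 1)) :=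
      qPoch_succ' Q _
    have h2 : qPoch Q Q (d + 1) = qPoch Q Q d * (1 - Q ^ (d + 1)) := qPoch_succ' Q _
    have h3 : qPoch Q Q (i + 1) = qPoch Q Q i * (1 - Q ^ (i + 1)) := qPoch_succ' Q _
    have h4 : Q ^ (i + 1 + d + 1) = Q ^ (d + 1) * Q ^ (i + 1) := by
      rw [← pow_add]; congr 1; omega
    have n1 := P_ne hQ0 hQ1 (i + 1 + d)
    have n2 := P_ne hQ0 hQ1 d
    have n3 := P_ne hQ0 hQ1 i
    have n4 := (one_sub_pow_pos hQ0 hQ1 (d + 1) (by omega)).ne'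
    have n5 := (one_sub_pow_pos hQ0 hQ1 (i + 1) (by omega)).ne'
    rw [h1, h2, h3, h4]
    field_simp
    ring
  · rcases le_or_gt (i + 1) (m + 1) with h2 | h2
    · obtain rfl : i = m := by omega
      rw [Bn, Bn, Bn, if_pos le_rfl, if_neg (by omega), if_pos le_rfl]
      simp only [Nat.sub_self, qPoch_zero]
      rw [mul_one, mul_one, div_self (P_ne hQ0 hQ1 (i + 1)), div_self (P_ne hQ0 hQ1 i)]
      norm_num
    · rw [Bn, Bn, Bn, if_neg (by omega), if_neg (by omega), if_neg (by omega)]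
      ring


lemma Pk_ne (k n : ℕ) (hk : 1 ≤ k) : qPoch (Q ^ k) Q n ≠ 0 := (Pk_pos hQ0 hQ1 k n hk).ne'

lemma tt_zero (r k m : ℕ) : tt' Q r k m 0 = 1 := by
  simp [tt', Bn_zero hQ0 hQ1, qPoch_zero]

omit hQ0 hQ1 in
lemma tt_top (r k m : ℕ) : tt' Q r k m (m + 1) = 0 := by
  simp [tt', Bn, Nat.not_succ_le_self]

lemma sum_rec (r k m : ℕ) (hk : 1 ≤ k) :
    ∑ j ∈ Finset.range (m + 2), tt' Q r k (m + 1) j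
      = ∑ j ∈ Finset.range (m + 1), tt' Q r k m j
        + Q ^ (m + 1 + r) / (1 - Q ^ k) * ∑ j ∈ Finset.range (m + 1), tt' Q (r + 1) (k + 1) m j := by
  rw [Finset.sum_range_succ' _ (m + 1)]
  have step : ∀ i ∈ Finset.range (m + 1),
      tt' Q r k (m + 1) (i + 1)
        = tt' Q r k m (i + 1)
          + Q ^ (m + 1 + r) / (1 - Q ^ k) * tt' Q (r + 1) (k + 1) m i := by
    intro i hi
    have him : i ≤ m := by simpa using Nat.lt_succ_iff.mp (Finset.mem_range.mp hi)
    have hpas := Bn_pascal hQ0 hQ1 m (i + 1) (by omega)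
    simp only [Nat.add_sub_cancel] at hpas
    have e1 : m + 1 - (i + 1) = m - i := by omega
    rw [e1] at hpas
    rw [tt', hpas]
    have hsl : qPoch (Q ^ k) Q (i + 1) = (1 - Q ^ k) * qPoch (Q ^ (k + 1)) Q i := by
      rw [qPoch_succ_left, ← pow_succ]
    have hexp : Q ^ ((i + 1) * (i + 1) + r * (i + 1)) * Q ^ (m - i)
        = Q ^ (m + 1 + r) * Q ^ (i * i + (r + 1) * i) := by
      rw [← pow_add, ← pow_add]; congr 1
      have : m - i + i = m := by omega
      nlinarith [this]
    rw [tt', tt', hsl]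
    have n1 := (one_sub_pow_pos hQ0 hQ1 k hk).ne'
    have n2 := Pk_ne hQ0 hQ1 (k + 1) i (by omega)
    have n3 := Pk_ne hQ0 hQ1 k (i + 1) hk
    rw [hsl] at n3
    field_simp
    linear_combination (Bn Q m i) * hexp
  rw [Finset.sum_congr rfl step, Finset.sum_add_distrib, ← Finset.mul_sum]
  rw [tt_zero hQ0 hQ1]
  have : ∑ i ∈ Finset.range (m + 1), tt' Q r k m (i + 1) + 1
      = ∑ j ∈ Finset.range (m + 2), tt' Q r k m j := by
    rw [Finset.sum_range_succ' _ (m + 1), tt_zero hQ0 hQ1]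
  rw [add_right_comm, this, Finset.sum_range_succ, tt_top, add_zero]


lemma lemA : ∀ (m k : ℕ),
    (∑ j ∈ Finset.range (m + 1), tt' Q k (k + 1) m j) = 1 / qPoch (Q ^ (k + 1)) Q m := by
  intro m
  induction m with
  | zero => intro k; simp [tt_zero hQ0 hQ1, qPoch_zero]
  | succ m ih =>
    intro k
    rw [sum_rec hQ0 hQ1 k (k + 1) m (by omega), ih k, ih (k + 1)]
    have h1 : qPoch (Q ^ (k + 1)) Q (m + 1)
        = qPoch (Q ^ (k + 1)) Q m * (1 - Q ^ (m + 1 + k)) := by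
      rw [qPoch_succ, ← pow_add, show k + 1 + m = m + 1 + k by omega]
    have h2 : qPoch (Q ^ (k + 1)) Q (m + 1)
        = (1 - Q ^ (k + 1)) * qPoch (Q ^ (k + 1 + 1)) Q m := by
      rw [qPoch_succ_left, ← pow_succ]
    have nA := Pk_ne hQ0 hQ1 (k + 1) m (by omega)
    have n1 := (one_sub_pow_pos hQ0 hQ1 (k + 1) (by omega)).ne'
    have nX := by
      have := one_sub_pow_pos hQ0 hQ1 (m + 1 + k) (by omega)
      exact this.ne'
    have hB : qPoch (Q ^ (k + 1 + 1)) Q m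
        = qPoch (Q ^ (k + 1)) Q m * (1 - Q ^ (m + 1 + k)) / (1 - Q ^ (k + 1)) := by
      rw [← h1, h2]
      field_simp
    rw [hB, h1]
    field_simp
    ring

omit hQ0 hQ1 in
lemma ck_zero (k : ℕ) : ck Q k 0 = 1 := by
  simp [ck, qPoch_zero]

omit hQ0 hQ1 in
lemma ck_succ (k m : ℕ) :
    ck Q k (m + 1) = 1 / qPoch Q Q (m + 1) - Q ^ k * ck Q (k + 1) m := by
  rw [ck, Finset.sum_range_succ' _ (m + 1)]
  have h0 : (-1 : ℝ) ^ 0 * Q ^ (k * 0 + Nat.choose 0 2) / qPoch Q Q (m + 1 - 0)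
      = 1 / qPoch Q Q (m + 1) := by norm_num
  have hstep : ∀ i ∈ Finset.range (m + 1),
      (-1 : ℝ) ^ (i + 1) * Q ^ (k * (i + 1) + Nat.choose (i + 1) 2) / qPoch Q Q (m + 1 - (i + 1))
        = -Q ^ k * ((-1 : ℝ) ^ i * Q ^ ((k + 1) * i + Nat.choose i 2) / qPoch Q Q (m - i)) := by
    intro i _
    have e1 : m + 1 - (i + 1) = m - i := by omega
    have e2 : k * (i + 1) + Nat.choose (i + 1) 2 = k + ((k + 1) * i + Nat.choose i 2) := by
      rw [Nat.choose_succ_succ, Nat.choose_one_right]; ring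
    rw [e1, e2, pow_add, pow_succ]
    ring
  rw [Finset.sum_congr rfl hstep, h0, ← Finset.mul_sum]
  rw [show (∑ i ∈ Finset.range (m + 1),
      (-1 : ℝ) ^ i * Q ^ ((k + 1) * i + Nat.choose i 2) / qPoch Q Q (m - i)) = ck Q (k + 1) m
    from rfl]
  ring

lemma lemG : ∀ (m k : ℕ),
    1 / qPoch Q Q m = (1 - Q ^ (k + m)) * ck Q k m + Q ^ k * ck Q (k + 1) m := by
  intro m
  induction m with
  | zero =>
    intro k
    simp only [ck_zero, qPoch_zero, Nat.add_zero, mul_one]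
    ring
  | succ m ih =>
    intro k
    rw [ck_succ, ck_succ]
    have hP : qPoch Q Q (m + 1) = qPoch Q Q m * (1 - Q ^ (m + 1)) := qPoch_succ' Q m
    have nP := P_ne hQ0 hQ1 m
    have nX := (one_sub_pow_pos hQ0 hQ1 (m + 1) (by omega)).ne'
    have key : (1 - Q ^ k * Q ^ (m + 1)) * ck Q (k + 1) m + Q ^ k * Q * ck Q (k + 1 + 1) m
        = 1 / qPoch Q Q m := by
      have := (ih (k + 1)).symm
      rw [show Q ^ (k + 1 + m) = Q ^ k * Q ^ (m + 1) by rw [← pow_add]; congr 1; omega,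
          show Q ^ (k + 1) = Q ^ k * Q by rw [pow_succ]] at this
      exact this
    have e1 : Q ^ (k + (m + 1)) = Q ^ k * Q ^ (m + 1) := pow_add Q k (m + 1)
    have e2 : Q ^ (k + 1) = Q ^ k * Q := pow_succ Q k
    rw [e1, e2]
    have expand : (1 - Q ^ k * Q ^ (m + 1)) * (1 / qPoch Q Q (m + 1) - Q ^ k * ck Q (k + 1) m)
          + Q ^ k * (1 / qPoch Q Q (m + 1) - Q ^ k * Q * ck Q (k + 1 + 1) m)
        = 1 / qPoch Q Q (m + 1) + Q ^ k * ((1 - Q ^ (m + 1)) * (1 / qPoch Q Q (m + 1)))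
          - Q ^ k * ((1 - Q ^ k * Q ^ (m + 1)) * ck Q (k + 1) m
            + Q ^ k * Q * ck Q (k + 1 + 1) m) := by
      ring
    rw [expand, key]
    have hinv : (1 - Q ^ (m + 1)) * (1 / qPoch Q Q (m + 1)) = 1 / qPoch Q Q m := by
      rw [hP]; field_simp
    rw [hinv]
    ring

lemma star (k m : ℕ) :
    (1 - Q ^ (m + 1)) * ck Q k (m + 1)
      = (1 - Q ^ (k + m)) * ck Q k m + Q ^ (m + 1 + k) * ck Q (k + 1) m := by
  rw [ck_succ]
  have hG := (lemG hQ0 hQ1 m k).symm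
  have hP : qPoch Q Q (m + 1) = qPoch Q Q m * (1 - Q ^ (m + 1)) := qPoch_succ' Q m
  have nP := P_ne hQ0 hQ1 m
  have nX := (one_sub_pow_pos hQ0 hQ1 (m + 1) (by omega)).ne'
  have e1 : Q ^ (m + 1 + k) = Q ^ (m + 1) * Q ^ k := by rw [← pow_add]
  have expand : (1 - Q ^ (m + 1)) * (1 / qPoch Q Q (m + 1) - Q ^ k * ck Q (k + 1) m)
      = (1 - Q ^ (m + 1)) * (1 / qPoch Q Q (m + 1))
        - Q ^ k * ck Q (k + 1) m + Q ^ (m + 1) * Q ^ k * ck Q (k + 1) m := by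
    ring
  have hinv : (1 - Q ^ (m + 1)) * (1 / qPoch Q Q (m + 1)) = 1 / qPoch Q Q m := by
    rw [hP]; field_simp
  rw [expand, hinv, ← hG, e1]
  ring

lemma lemB : ∀ (m k : ℕ),
    (∑ j ∈ Finset.range (m + 1), tt' Q (k + 1) (k + 1) m j)
      = qPoch Q Q m / qPoch (Q ^ (k + 1)) Q m * ck Q (k + 1) m := by
  intro m
  induction m with
  | zero => intro k; simp [tt_zero hQ0 hQ1, qPoch_zero, ck_zero]
  | succ m ih =>
    intro k
    rw [sum_rec hQ0 hQ1 (k + 1) (k + 1) m (by omega), ih k, ih (k + 1)]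
    have hstar := star hQ0 hQ1 (k + 1) m
    have h1 : qPoch (Q ^ (k + 1)) Q (m + 1)
        = qPoch (Q ^ (k + 1)) Q m * (1 - Q ^ (k + 1 + m)) := by
      rw [qPoch_succ, ← pow_add]
    have h2 : qPoch (Q ^ (k + 1)) Q (m + 1)
        = (1 - Q ^ (k + 1)) * qPoch (Q ^ (k + 1 + 1)) Q m := by
      rw [qPoch_succ_left, ← pow_succ]
    have hPm : qPoch Q Q (m + 1) = qPoch Q Q m * (1 - Q ^ (m + 1)) := qPoch_succ' Q m
    have nA := Pk_ne hQ0 hQ1 (k + 1) m (by omega)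
    have nB := Pk_ne hQ0 hQ1 (k + 1 + 1) m (by omega)
    have n1 := (one_sub_pow_pos hQ0 hQ1 (k + 1) (by omega)).ne'
    have nKM := (one_sub_pow_pos hQ0 hQ1 (k + 1 + m) (by omega)).ne'
    have nM1 := (one_sub_pow_pos hQ0 hQ1 (m + 1) (by omega)).ne'
    have hB : qPoch (Q ^ (k + 1 + 1)) Q m
        = qPoch (Q ^ (k + 1)) Q m * (1 - Q ^ (k + 1 + m)) / (1 - Q ^ (k + 1)) := by
      rw [← h1, h2]; field_simp
    rw [h1, hB, hPm]
    have e3 : Q ^ (m + 1 + (k + 1)) = Q ^ (m + 1) * Q ^ (k + 1) := by rw [← pow_add]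
    rw [e3]
    have hck : ck Q (k + 1) (m + 1)
        = ((1 - Q ^ (k + 1 + m)) * ck Q (k + 1) m
            + Q ^ (m + 1) * Q ^ (k + 1) * ck Q (k + 1 + 1) m) / (1 - Q ^ (m + 1)) := by
      rw [eq_div_iff nM1, mul_comm (ck Q (k + 1) (m + 1)) (1 - Q ^ (m + 1)), hstar]
      rw [show Q ^ (m + 1 + (k + 1)) = Q ^ (m + 1) * Q ^ (k + 1) from by rw [← pow_add]]
    rw [hck]
    have nP := P_ne hQ0 hQ1 m
    field_simp

end

lemma two_mul_tri : ∀ i : ℕ, 2 * (i + Nat.choose i 2) = i * (i + 1) := by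
  intro i
  induction i with
  | zero => rfl
  | succ n ihn =>
    rw [Nat.choose_succ_succ, Nat.choose_one_right]
    ring_nf
    ring_nf at ihn
    linarith

theorem anzanello_c_sum (q : ℝ) (hq : 1 < q) (m : ℕ) (hm : 1 ≤ m) :
    ∑ k ∈ Finset.Icc 1 (m + 1),
      (1 - q ^ (-(2 * (k : ℤ) - 1))) * q ^ (-(2 * (k : ℤ) ^ 2) + 3 * k - 1)
        / qPoch (q ^ (-2 : ℤ)) (q ^ (-2 : ℤ)) (k - 1)
        * (qPoch (q ^ (-(2 * (k : ℤ)))) (q ^ (-2 : ℤ)) (m + 1 - k)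
            / qPoch (q ^ (-2 : ℤ)) (q ^ (-2 : ℤ)) (m + 1 - k))
        * q ^ (-1 - (m : ℤ) + k)
    = 1 / (q ^ m * qPoch (q ^ (-2 : ℤ)) (q ^ (-2 : ℤ)) m)
      + 1 / q ^ (m + 1) * ∑ i ∈ Finset.range (m + 1),
          (-1 : ℝ) ^ ((i : ℤ) - 1)
            / (q ^ (i * (i + 1)) * qPoch (q ^ (-2 : ℤ)) (q ^ (-2 : ℤ)) (m - i)) := by
  have hq0 : (0 : ℝ) < q := lt_trans one_pos hq
  have hqne : q ≠ 0 := hq0.ne'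
  set Q : ℝ := q ^ (-2 : ℤ) with hQdef
  have hQ0 : 0 < Q := zpow_pos hq0 _
  have hQ1 : Q < 1 := by
    rw [hQdef]
    rw [show (-2 : ℤ) = -((2 : ℕ) : ℤ) by norm_num, zpow_neg, zpow_natCast]
    rw [inv_lt_one_iff₀]
    right
    exact one_lt_pow₀ hq (by norm_num)
  have hQn : ∀ n : ℕ, Q ^ n = q ^ ((-2) * (n : ℤ)) := by
    intro n
    rw [hQdef, ← zpow_natCast (q ^ (-2 : ℤ)) n, ← zpow_mul]
  rw [show Finset.Icc 1 (m + 1) = Finset.Ico 1 (m + 2) from by rw [← Finset.Ico_add_one_right_eq_Icc]; rfl,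
    Finset.sum_Ico_eq_sum_range]
  have hbound : m + 2 - 1 = m + 1 := by omega
  rw [hbound]
  have hterm : ∀ j ∈ Finset.range (m + 1),
      (1 - q ^ (-(2 * ((1 + j : ℕ) : ℤ) - 1))) * q ^ (-(2 * ((1 + j : ℕ) : ℤ) ^ 2) + 3 * ((1 + j : ℕ) : ℤ) - 1)
        / qPoch Q Q ((1 + j) - 1)
        * (qPoch (q ^ (-(2 * ((1 + j : ℕ) : ℤ)))) Q (m + 1 - (1 + j))
            / qPoch Q Q (m + 1 - (1 + j)))
        * q ^ (-1 - (m : ℤ) + ((1 + j : ℕ) : ℤ))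
      = q ^ (-(m : ℤ)) * tt' Q 0 1 m j - q ^ (-(m : ℤ) - 1) * tt' Q 1 1 m j := by
    intro j hj
    have hjm : j ≤ m := by
      have := Finset.mem_range.mp hj; omega
    have e0 : (1 + j) - 1 = j := by omega
    have e0' : m + 1 - (1 + j) = m - j := by omega
    rw [e0, e0']
    have harg : q ^ (-(2 * ((1 + j : ℕ) : ℤ))) = Q ^ (1 + j) := by
      rw [hQn]
      congr 1
      try ring
    have hsplit : qPoch Q Q m = qPoch Q Q j * qPoch (Q ^ (1 + j)) Q (m - j) := by
      have h := qPoch_add Q Q j (m - j)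
      rw [show j + (m - j) = m from by omega] at h
      rw [h, show 1 + j = j + 1 from by omega, ← pow_succ']
    have nPj := P_ne hQ0 hQ1 j
    have nPmj := P_ne hQ0 hQ1 (m - j)
    have nPm := P_ne hQ0 hQ1 m
    have hpoch : qPoch (Q ^ (1 + j)) Q (m - j) = qPoch Q Q m / qPoch Q Q j := by
      rw [hsplit]; field_simp
    rw [harg, hpoch]
    simp only [tt', Bn, if_pos hjm, pow_one, Nat.zero_mul, Nat.one_mul, Nat.add_zero]
    have key : (1 - q ^ (-(2 * ((1 + j : ℕ) : ℤ) - 1))) *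
          (q ^ (-(2 * ((1 + j : ℕ) : ℤ) ^ 2) + 3 * ((1 + j : ℕ) : ℤ) - 1) * q ^ (-1 - (m : ℤ) + ((1 + j : ℕ) : ℤ)))
        = q ^ (-(m : ℤ)) * q ^ ((-2) * ((j * j : ℕ) : ℤ)) - q ^ (-(m : ℤ) - 1) * q ^ ((-2) * ((j * j + j : ℕ) : ℤ)) := by
      rw [sub_mul, one_mul, ← zpow_add₀ hqne, ← zpow_add₀ hqne, ← zpow_add₀ hqne,
        ← zpow_add₀ hqne]
      congr 1
      · congr 1; push_cast; ring
      · congr 1; push_cast; ring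
    rw [hQn (j * j), hQn (j * j + j)]
    rw [show qPoch Q Q m / (qPoch Q Q j * qPoch Q Q (m - j))
        = qPoch Q Q m / qPoch Q Q j / qPoch Q Q (m - j) from (div_div _ _ _).symm]
    linear_combination
      (qPoch Q Q m / qPoch Q Q j / qPoch Q Q (m - j) / qPoch Q Q j) * key
  rw [Finset.sum_congr rfl hterm, Finset.sum_sub_distrib, ← Finset.mul_sum, ← Finset.mul_sum]
  have hA := lemA hQ0 hQ1 m 0
  rw [show (0 : ℕ) + 1 = 1 from rfl, pow_one] at hA
  have hB := lemB hQ0 hQ1 m 0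
  rw [show (0 : ℕ) + 1 = 1 from rfl, pow_one, div_self (P_ne hQ0 hQ1 m), one_mul] at hB
  rw [hA, hB]
  have hR : ∀ i ∈ Finset.range (m + 1),
      (-1 : ℝ) ^ ((i : ℤ) - 1) / (q ^ (i * (i + 1)) * qPoch Q Q (m - i))
        = -((-1 : ℝ) ^ i * Q ^ (1 * i + Nat.choose i 2) / qPoch Q Q (m - i)) := by
    intro i _
    have hsgn : (-1 : ℝ) ^ ((i : ℤ) - 1) = -((-1 : ℝ) ^ i) := by
      rw [zpow_sub₀ (by norm_num : (-1 : ℝ) ≠ 0), zpow_one, zpow_natCast, div_neg, div_one]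
    have hpow : Q ^ (1 * i + Nat.choose i 2) * q ^ (i * (i + 1)) = 1 := by
      rw [hQn, ← zpow_natCast q (i * (i + 1)), ← zpow_add₀ hqne]
      rw [show (-2) * ((1 * i + Nat.choose i 2 : ℕ) : ℤ) + ((i * (i + 1) : ℕ) : ℤ) = 0 from ?_,
        zpow_zero]
      have h2 := two_mul_tri i
      push_cast
      push_cast at h2
      linarith
    have nq : q ^ (i * (i + 1)) ≠ 0 := pow_ne_zero _ hqne
    have nP := P_ne hQ0 hQ1 (m - i)
    rw [hsgn]
    field_simp
    linear_combination hpow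
  rw [Finset.sum_congr rfl hR, Finset.sum_neg_distrib]
  have eA : q ^ (-(m : ℤ)) = 1 / q ^ m := by
    rw [← zpow_natCast q m, one_div, ← zpow_neg]
  have eB : q ^ (-(m : ℤ) - 1) = 1 / q ^ (m + 1) := by
    rw [← zpow_natCast q (m + 1), one_div, ← zpow_neg]
    congr 1
    push_cast
    ring
  rw [eA, eB, show (∑ i ∈ Finset.range (m + 1),
      (-1 : ℝ) ^ i * Q ^ (1 * i + Nat.choose i 2) / qPoch Q Q (m - i)) = ck Q 1 m from rfl]
  ring
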